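/- For all n ≥ 0, the binary hipster numbers satisfy 0 < h_n ≤ c_n, where c_n is the n-th Catalan number. -/

import Mathlib

/-- For all `n ≥ 0`, the binary hipster numbers satisfy `0 < h n ≤ c n`,
where `c n` is the `n`-th Catalan number. -/
theorem binary_hipster_le_catalan
    (c h : ℕ → ℤ)
    (hc0 : c 0 = 1)
    (hc : ∀ n, 1 ≤ n → c n = ∑ i ∈ Finset.range n, c i * c (n - 1 - i))
    (hh0 : h 0 = 1)
    (hh : ∀ n, 1 ≤ n →
      h n = (∑ i ∈ Finset.range n, h i * h (n - 1 - i))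
              - (if Odd n then h ((n - 1) / 2) else 0)
              + (if n = 1 then 1 else 0)) :
    ∀ n, 0 < h n ∧ h n ≤ c n := by
  intro n
  induction n using Nat.strong_induction_on with
  | _ n ih =>
    rcases Nat.eq_zero_or_pos n with hz | hpos
    · subst hz
      constructor <;> simp [hh0, hc0]
    have hhn := hh n hpos
    have hcn := hc n hpos
    have hterm : ∀ i ∈ Finset.range n, 0 < h i * h (n - 1 - i) := by
      intro i hi
      rw [Finset.mem_range] at hi
      have h1i := ih i (by omega)
      have h2i := ih (n - 1 - i) (by omega)
      exact mul_pos h1i.1 h2i.1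
    have hsum_le : (∑ i ∈ Finset.range n, h i * h (n - 1 - i))
        ≤ ∑ i ∈ Finset.range n, c i * c (n - 1 - i) := by
      apply Finset.sum_le_sum
      intro i hi
      rw [Finset.mem_range] at hi
      have hi1 := ih i (by omega)
      have hi2 := ih (n - 1 - i) (by omega)
      exact mul_le_mul hi1.2 hi2.2 hi2.1.le (le_trans hi1.1.le hi1.2)
    by_cases hn1 : n = 1
    · subst hn1
      have hodd1 : Odd 1 := odd_one
      simp only [Finset.sum_range_one, if_pos hodd1, if_pos rfl] at hhn
      norm_num [hh0] at hhn
      simp only [Finset.sum_range_one] at hcn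
      norm_num [hc0] at hcn
      constructor
      · rw [hhn]; norm_num
      · rw [hhn, hcn]
    · simp only [if_neg hn1, add_zero] at hhn
      by_cases hodd : Odd n
      · rw [if_pos hodd] at hhn
        set m := (n - 1) / 2 with hm
        have hn3 : 3 ≤ n := by
          obtain ⟨k, hk⟩ := hodd; omega
        have hm1 : 1 ≤ m := by omega
        have hmlt : m < n := by omega
        have hmem : m ∈ Finset.range n := Finset.mem_range.mpr hmlt
        have hkey : n - 1 - m = m := by
          obtain ⟨k, hk⟩ := hodd; omega
        have hhm := ih m hmlt
        have h1m : 1 ≤ h m := hhm.1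
        have hsplit : (∑ i ∈ Finset.range n, h i * h (n - 1 - i))
            = h m * h (n - 1 - m) + ∑ i ∈ (Finset.range n).erase m, h i * h (n - 1 - i) :=
          (Finset.add_sum_erase _ _ hmem).symm
        rw [hkey] at hsplit
        have hE : 0 < ∑ i ∈ (Finset.range n).erase m, h i * h (n - 1 - i) := by
          apply Finset.sum_pos
          · intro i hi
            exact hterm i (Finset.mem_of_mem_erase hi)
          · exact ⟨0, Finset.mem_erase.mpr ⟨by omega, Finset.mem_range.mpr (by omega)⟩⟩
        have hsq : h m ≤ h m * h m := le_mul_of_one_le_left (by linarith) h1m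
        constructor
        · rw [hhn, hsplit]; linarith
        · rw [hhn, hcn]; linarith
      · rw [if_neg hodd, sub_zero] at hhn
        have hS : 0 < ∑ i ∈ Finset.range n, h i * h (n - 1 - i) :=
          Finset.sum_pos hterm ⟨0, Finset.mem_range.mpr hpos⟩
        constructor
        · rw [hhn]; exact hS
        · rw [hhn, hcn]; exact hsum_le
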